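/- For any m×n real matrix A there exist k rows of A whose span contains the rows of a rank-k matrix Ã with ‖A − Ã‖_F² ≤ (k+1)·‖A − A_k‖_F², where A_k is the best rank-k approximation of A in Frobenius norm. -/

import Mathlib

/-- Squared Frobenius norm. -/
def frobSq {m n : ℕ} (M : Matrix (Fin m) (Fin n) ℝ) : ℝ := ∑ i, ∑ j, M i j ^ 2

namespace KRowsAux


open Finset Matrix

lemma val_succAbove {w : ℕ} (c : Fin (w+1)) (t : Fin w) :
    ((c.succAbove t : Fin (w+1)) : ℕ) = if (t:ℕ) < (c:ℕ) then (t:ℕ) else (t:ℕ)+1 := by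
  rcases Nat.lt_or_ge (t:ℕ) (c:ℕ) with h | h
  · rw [Fin.succAbove_of_castSucc_lt _ _ (by simpa [Fin.lt_def] using h)]
    simp [h]
  · rw [Fin.succAbove_of_le_castSucc _ _ (by simpa [Fin.le_def] using h)]
    simp [Nat.not_lt.mpr h]

lemma succAbove_comm {e : ℕ} (j j' : Fin (e+2)) (p p' : Fin (e+1))
    (h1 : j.succAbove p' = j') (h2 : j'.succAbove p = j) (q : Fin e) :
    j.succAbove (p'.succAbove q) = j'.succAbove (p.succAbove q) := by
  have h1' := congrArg Fin.val h1
  have h2' := congrArg Fin.val h2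
  rw [val_succAbove] at h1' h2'
  apply Fin.ext
  simp only [val_succAbove]
  split_ifs at h1' h2' ⊢ <;> omega

lemma sign_parity {e : ℕ} (j j' : Fin (e+2)) (p p' : Fin (e+1))
    (h1 : j.succAbove p' = j') (h2 : j'.succAbove p = j) :
    (-1:ℝ)^(j:ℕ) * (-1:ℝ)^(j':ℕ) * ((-1:ℝ)^(p:ℕ) * (-1:ℝ)^(p':ℕ)) = -1 := by
  have h1' := congrArg Fin.val h1
  have h2' := congrArg Fin.val h2
  rw [val_succAbove] at h1' h2'
  have hmod : ((j:ℕ) + (j':ℕ) + ((p:ℕ) + (p':ℕ))) % 2 = 1 := by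
    split_ifs at h1' h2' <;> omega
  have hodd : Odd ((j:ℕ) + (j':ℕ) + ((p:ℕ) + (p':ℕ))) := Nat.odd_iff.mpr hmod
  calc (-1:ℝ)^(j:ℕ) * (-1:ℝ)^(j':ℕ) * ((-1:ℝ)^(p:ℕ) * (-1:ℝ)^(p':ℕ))
      = (-1:ℝ) ^ ((j:ℕ) + (j':ℕ) + ((p:ℕ) + (p':ℕ))) := by
        rw [pow_add, pow_add, pow_add]
    _ = -1 := Odd.neg_one_pow hodd

lemma det_cycle {e : ℕ} (v : Fin (e+1) → Fin (e+1) → ℝ) (p : Fin (e+1)) :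
    Matrix.det (Matrix.of v) =
      (-1:ℝ)^(p:ℕ) *
        Matrix.det (Matrix.of (Fin.cons (v p) (fun s => v (p.succAbove s)))) := by
  have hM : Matrix.of v =
      (Matrix.of (Fin.cons (v p) (fun s => v (p.succAbove s)))).submatrix p.cycleRange id := by
    ext t q
    rcases eq_or_ne t p with rfl | h
    · simp [Matrix.submatrix_apply, Fin.cycleRange_self]
    · obtain ⟨s, rfl⟩ := Fin.exists_succAbove_eq h
      simp [Matrix.submatrix_apply, Fin.cycleRange_succAbove]
  rw [hM, Matrix.det_permute, Fin.sign_cycleRange]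
  push_cast
  ring


variable {m n d : ℕ}


noncomputable def dL (L : Fin m → Fin d → ℝ) (f : Fin d → Fin m) : ℝ :=
  Matrix.det (Matrix.of (fun p => L (f p)))

noncomputable def uu (L : Fin m → Fin d → ℝ) (r : Fin m → Fin n → ℝ)
    (g : Fin (d+1) → Fin m) (x : Fin n) : ℝ :=
  ∑ j : Fin (d+1), (-1:ℝ)^(j:ℕ) * dL L (fun s => g (j.succAbove s)) * r (g j) x

lemma sum_insertNth {β : Type*} [AddCommMonoid β] (j : Fin (d+1))
    (F : (Fin (d+1) → Fin m) → β) :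
    ∑ g : Fin (d+1) → Fin m, F g
      = ∑ i : Fin m, ∑ f : Fin d → Fin m, F (j.insertNth i f) := by
  have h := (Fintype.sum_equiv (Fin.insertNthEquiv (fun _ => Fin m) j)
    (fun pr : Fin m × (Fin d → Fin m) => F (j.insertNth pr.1 pr.2)) F (fun pr => rfl))
  rw [← h, Fintype.sum_prod_type]

lemma sq_expand {ι : Type*} [Fintype ι] (c : ι → ℝ) (v : ι → Fin n → ℝ) :
    ∑ x, (∑ i, c i * v i x)^2
      = ∑ i, ∑ i', c i * c i' * (∑ x, v i x * v i' x) := by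
  have h1 : ∀ x : Fin n, (∑ i, c i * v i x)^2
      = ∑ i, ∑ i', c i * c i' * (v i x * v i' x) := by
    intro x
    rw [pow_two, Finset.sum_mul_sum]
    exact Finset.sum_congr rfl fun i _ => Finset.sum_congr rfl fun i' _ => by ring
  rw [Finset.sum_congr rfl fun x _ => h1 x]
  rw [Finset.sum_comm]
  refine Finset.sum_congr rfl fun i _ => ?_
  rw [Finset.sum_comm]
  refine Finset.sum_congr rfl fun i' _ => ?_
  rw [Finset.mul_sum]

lemma diag_sum (L : Fin m → Fin d → ℝ) (r : Fin m → Fin n → ℝ) (j : Fin (d+1)) :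
    ∑ g : Fin (d+1) → Fin m,
        (dL L (fun s => g (j.succAbove s)))^2 * (∑ x, (r (g j) x)^2)
      = (∑ f : Fin d → Fin m, (dL L f)^2) * (∑ i : Fin m, ∑ x, (r i x)^2) := by
  rw [sum_insertNth j]
  simp only [Fin.insertNth_apply_same, Fin.insertNth_apply_succAbove]
  rw [Finset.sum_comm, Finset.sum_mul_sum]


noncomputable def cdet {m e : ℕ} (L : Fin m → Fin (e+1) → ℝ)
    (i : Fin m) (h : Fin e → Fin m) : ℝ :=
  Matrix.det (Matrix.of (Fin.cons (L i) (fun s => L (h s))))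

lemma offdiag_sum (L : Fin m → Fin d → ℝ) (r : Fin m → Fin n → ℝ)
    (j j' : Fin (d+1)) (hne : j ≠ j') :
    ∑ g : Fin (d+1) → Fin m,
        ((-1:ℝ)^(j:ℕ) * dL L (fun s => g (j.succAbove s)))
          * ((-1:ℝ)^(j':ℕ) * dL L (fun s => g (j'.succAbove s)))
          * (∑ x, r (g j) x * r (g j') x) ≤ 0 := by
  cases d with
  | zero => exact absurd (Fin.ext (by omega)) hne
  | succ e =>
    obtain ⟨p', hp'⟩ := Fin.exists_succAbove_eq hne.symm
    obtain ⟨p, hp⟩ := Fin.exists_succAbove_eq hne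
    -- pointwise rewriting of the summand
    have hptw : ∀ g : Fin (e+2) → Fin m,
        ((-1:ℝ)^(j:ℕ) * dL L (fun s => g (j.succAbove s)))
          * ((-1:ℝ)^(j':ℕ) * dL L (fun s => g (j'.succAbove s)))
          * (∑ x, r (g j) x * r (g j') x)
        = -(cdet L (g (j.succAbove p')) (fun q => g (j.succAbove (p'.succAbove q)))
            * cdet L (g j) (fun q => g (j.succAbove (p'.succAbove q)))
            * (∑ x, r (g j) x * r (g (j.succAbove p')) x)) := by
      intro g
      have hd1 : dL L (fun s => g (j.succAbove s))
          = (-1:ℝ)^(p':ℕ) * cdet L (g (j.succAbove p'))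
              (fun q => g (j.succAbove (p'.succAbove q))) :=
        det_cycle (fun s => L (g (j.succAbove s))) p'
      have hd2 : dL L (fun s => g (j'.succAbove s))
          = (-1:ℝ)^(p:ℕ) * cdet L (g j)
              (fun q => g (j.succAbove (p'.succAbove q))) := by
        have h0 : dL L (fun s => g (j'.succAbove s))
            = (-1:ℝ)^(p:ℕ) * cdet L (g (j'.succAbove p))
                (fun q => g (j'.succAbove (p.succAbove q))) :=
          det_cycle (fun s => L (g (j'.succAbove s))) p
        rw [h0, hp]
        congr 2
        funext q
        rw [succAbove_comm j j' p p' hp' hp q]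
      rw [hd1, hd2, hp']
      have hsg := sign_parity j j' p p' hp' hp
      set a := cdet L (g j') (fun q => g (j.succAbove (p'.succAbove q)))
      set b := cdet L (g j) (fun q => g (j.succAbove (p'.succAbove q)))
      set c := ∑ x, r (g j) x * r (g j') x
      calc ((-1:ℝ)^(j:ℕ) * ((-1:ℝ)^(p':ℕ) * a)) * ((-1:ℝ)^(j':ℕ) * ((-1:ℝ)^(p:ℕ) * b)) * c
          = ((-1:ℝ)^(j:ℕ) * (-1:ℝ)^(j':ℕ) * ((-1:ℝ)^(p:ℕ) * (-1:ℝ)^(p':ℕ))) * (a * b * c) := by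
            ring
        _ = -(a * b * c) := by rw [hsg]; ring
    rw [Finset.sum_congr rfl fun g _ => hptw g]
    -- reindex : g = j.insertNth a w
    rw [sum_insertNth j (fun g =>
      -(cdet L (g (j.succAbove p')) (fun q => g (j.succAbove (p'.succAbove q)))
        * cdet L (g j) (fun q => g (j.succAbove (p'.succAbove q)))
        * (∑ x, r (g j) x * r (g (j.succAbove p')) x)))]
    simp only [Fin.insertNth_apply_same, Fin.insertNth_apply_succAbove]
    -- now ∑ a, ∑ w, -(cdet (w p') (w ∘ p'.succAbove) * cdet a (w ∘ p'.succAbove) * ∑ x ...)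
    have hinner : ∀ a : Fin m,
        (∑ w : Fin (e+1) → Fin m,
          -(cdet L (w p') (fun q => w (p'.succAbove q))
            * cdet L a (fun q => w (p'.succAbove q))
            * (∑ x, r a x * r (w p') x)))
        = ∑ bidx : Fin m, ∑ f' : Fin e → Fin m,
            -(cdet L bidx f' * cdet L a f' * (∑ x, r a x * r bidx x)) := by
      intro a
      rw [sum_insertNth p' (fun w =>
        -(cdet L (w p') (fun q => w (p'.succAbove q))
          * cdet L a (fun q => w (p'.succAbove q))
          * (∑ x, r a x * r (w p') x)))]
      simp only [Fin.insertNth_apply_same, Fin.insertNth_apply_succAbove]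
    rw [Finset.sum_congr rfl fun a _ => hinner a]
    -- rearrange into -∑_{f'} ∑_x (∑_i cdet i f' * r i x)^2
    have hfinal : (∑ a : Fin m, ∑ bidx : Fin m, ∑ f' : Fin e → Fin m,
          -(cdet L bidx f' * cdet L a f' * (∑ x, r a x * r bidx x)))
        = -(∑ f' : Fin e → Fin m, ∑ x, (∑ i, cdet L i f' * r i x)^2) := by
      have h2 : ∀ f' : Fin e → Fin m, ∑ x, (∑ i, cdet L i f' * r i x)^2
          = ∑ a : Fin m, ∑ bidx : Fin m,
              cdet L a f' * cdet L bidx f' * (∑ x, r a x * r bidx x) :=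
        fun f' => sq_expand (fun i => cdet L i f') r
      calc (∑ a : Fin m, ∑ bidx : Fin m, ∑ f' : Fin e → Fin m,
              -(cdet L bidx f' * cdet L a f' * (∑ x, r a x * r bidx x)))
          = ∑ a : Fin m, ∑ f' : Fin e → Fin m, ∑ bidx : Fin m,
              -(cdet L bidx f' * cdet L a f' * (∑ x, r a x * r bidx x)) :=
            Finset.sum_congr rfl fun a _ => Finset.sum_comm
        _ = ∑ f' : Fin e → Fin m, ∑ a : Fin m, ∑ bidx : Fin m,
              -(cdet L bidx f' * cdet L a f' * (∑ x, r a x * r bidx x)) :=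
            Finset.sum_comm
        _ = -(∑ f' : Fin e → Fin m, ∑ x, (∑ i, cdet L i f' * r i x)^2) := by
            rw [← Finset.sum_neg_distrib]
            refine Finset.sum_congr rfl fun f' _ => ?_
            rw [h2 f', ← Finset.sum_neg_distrib]
            refine Finset.sum_congr rfl fun a _ => ?_
            rw [← Finset.sum_neg_distrib]
            exact Finset.sum_congr rfl fun bidx _ => by ring
    rw [hfinal, neg_nonpos]
    exact Finset.sum_nonneg fun f' _ =>
      Finset.sum_nonneg fun x _ => sq_nonneg _


lemma star (L : Fin m → Fin d → ℝ) (r : Fin m → Fin n → ℝ) :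
    ∑ g : Fin (d+1) → Fin m, ∑ x, (uu L r g x)^2
      ≤ ((d:ℝ)+1) * ((∑ f : Fin d → Fin m, (dL L f)^2) * (∑ i, ∑ x, (r i x)^2)) := by
  have hexp : ∀ g : Fin (d+1) → Fin m, ∑ x, (uu L r g x)^2
      = ∑ j : Fin (d+1), ∑ j' : Fin (d+1),
          ((-1:ℝ)^(j:ℕ) * dL L (fun s => g (j.succAbove s)))
            * ((-1:ℝ)^(j':ℕ) * dL L (fun s => g (j'.succAbove s)))
            * (∑ x, r (g j) x * r (g j') x) := by
    intro g
    have := sq_expand (ι := Fin (d+1))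
      (fun j => (-1:ℝ)^(j:ℕ) * dL L (fun s => g (j.succAbove s)))
      (fun j => r (g j))
    simpa [uu, mul_assoc] using this
  calc ∑ g : Fin (d+1) → Fin m, ∑ x, (uu L r g x)^2
      = ∑ g : Fin (d+1) → Fin m, ∑ j : Fin (d+1), ∑ j' : Fin (d+1),
          ((-1:ℝ)^(j:ℕ) * dL L (fun s => g (j.succAbove s)))
            * ((-1:ℝ)^(j':ℕ) * dL L (fun s => g (j'.succAbove s)))
            * (∑ x, r (g j) x * r (g j') x) :=
        Finset.sum_congr rfl fun g _ => hexp g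
    _ = ∑ j : Fin (d+1), ∑ j' : Fin (d+1), ∑ g : Fin (d+1) → Fin m,
          ((-1:ℝ)^(j:ℕ) * dL L (fun s => g (j.succAbove s)))
            * ((-1:ℝ)^(j':ℕ) * dL L (fun s => g (j'.succAbove s)))
            * (∑ x, r (g j) x * r (g j') x) := by
        rw [Finset.sum_comm]
        exact Finset.sum_congr rfl fun j _ => Finset.sum_comm
    _ ≤ ∑ j : Fin (d+1),
          ((∑ f : Fin d → Fin m, (dL L f)^2) * (∑ i, ∑ x, (r i x)^2)) := by
        refine Finset.sum_le_sum fun j _ => ?_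
        rw [← Finset.add_sum_erase _ _ (Finset.mem_univ j)]
        have hdiag : ∑ g : Fin (d+1) → Fin m,
            ((-1:ℝ)^(j:ℕ) * dL L (fun s => g (j.succAbove s)))
              * ((-1:ℝ)^(j:ℕ) * dL L (fun s => g (j.succAbove s)))
              * (∑ x, r (g j) x * r (g j) x)
            = (∑ f : Fin d → Fin m, (dL L f)^2) * (∑ i, ∑ x, (r i x)^2) := by
          rw [← diag_sum L r j]
          refine Finset.sum_congr rfl fun g _ => ?_
          have h1 : (-1:ℝ)^(j:ℕ) * (-1:ℝ)^(j:ℕ) = 1 := by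
            rw [← pow_add]
            exact Even.neg_one_pow ⟨(j:ℕ), rfl⟩
          have h2 : (∑ x, r (g j) x * r (g j) x) = ∑ x, (r (g j) x)^2 :=
            Finset.sum_congr rfl fun x _ => (pow_two _).symm
          rw [h2]
          calc ((-1:ℝ)^(j:ℕ) * dL L (fun s => g (j.succAbove s)))
                * ((-1:ℝ)^(j:ℕ) * dL L (fun s => g (j.succAbove s)))
                * (∑ x, (r (g j) x)^2)
              = ((-1:ℝ)^(j:ℕ) * (-1:ℝ)^(j:ℕ))
                  * ((dL L (fun s => g (j.succAbove s)))^2 * (∑ x, (r (g j) x)^2)) := by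
                ring
            _ = (dL L (fun s => g (j.succAbove s)))^2 * (∑ x, (r (g j) x)^2) := by
                rw [h1, one_mul]
        have hoff : ∑ j' ∈ Finset.univ.erase j, ∑ g : Fin (d+1) → Fin m,
            ((-1:ℝ)^(j:ℕ) * dL L (fun s => g (j.succAbove s)))
              * ((-1:ℝ)^(j':ℕ) * dL L (fun s => g (j'.succAbove s)))
              * (∑ x, r (g j) x * r (g j') x) ≤ 0 := by
          refine Finset.sum_nonpos fun j' hj' => ?_
          exact offdiag_sum L r j j' (Ne.symm (Finset.mem_erase.mp hj').1)
        calc (∑ g : Fin (d+1) → Fin m,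
              ((-1:ℝ)^(j:ℕ) * dL L (fun s => g (j.succAbove s)))
                * ((-1:ℝ)^(j:ℕ) * dL L (fun s => g (j.succAbove s)))
                * (∑ x, r (g j) x * r (g j) x))
            + ∑ j' ∈ Finset.univ.erase j, ∑ g : Fin (d+1) → Fin m,
              ((-1:ℝ)^(j:ℕ) * dL L (fun s => g (j.succAbove s)))
                * ((-1:ℝ)^(j':ℕ) * dL L (fun s => g (j'.succAbove s)))
                * (∑ x, r (g j) x * r (g j') x)
            ≤ (∑ g : Fin (d+1) → Fin m,
              ((-1:ℝ)^(j:ℕ) * dL L (fun s => g (j.succAbove s)))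
                * ((-1:ℝ)^(j:ℕ) * dL L (fun s => g (j.succAbove s)))
                * (∑ x, r (g j) x * r (g j) x)) + 0 := by
              exact add_le_add le_rfl hoff
          _ = (∑ f : Fin d → Fin m, (dL L f)^2) * (∑ i, ∑ x, (r i x)^2) := by
              rw [add_zero, hdiag]
    _ = ((d:ℝ)+1) * ((∑ f : Fin d → Fin m, (dL L f)^2) * (∑ i, ∑ x, (r i x)^2)) := by
        rw [Finset.sum_const, Finset.card_univ, Fintype.card_fin, nsmul_eq_mul]
        push_cast
        ring

lemma key (L : Fin m → Fin d → ℝ) (r : Fin m → Fin n → ℝ)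
    (f0 : Fin d → Fin m) (hf0 : dL L f0 ≠ 0) :
    ∃ f : Fin d → Fin m, dL L f ≠ 0 ∧
      ∑ i, ∑ x, (uu L r (Fin.cons i f) x)^2
        ≤ ((d:ℝ)+1) * (dL L f)^2 * (∑ i, ∑ x, (r i x)^2) := by
  by_contra hcon
  push_neg at hcon
  have hQ : ∀ f : Fin d → Fin m,
      0 ≤ ∑ i, ∑ x, (uu L r (Fin.cons i f) x)^2 :=
    fun f => Finset.sum_nonneg fun _ _ => Finset.sum_nonneg fun _ _ => sq_nonneg _
  have hlt : ∑ f : Fin d → Fin m, ((d:ℝ)+1) * (dL L f)^2 * (∑ i, ∑ x, (r i x)^2)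
      < ∑ f : Fin d → Fin m, ∑ i, ∑ x, (uu L r (Fin.cons i f) x)^2 := by
    apply Finset.sum_lt_sum
    · intro f _
      rcases eq_or_ne (dL L f) 0 with h0 | h0
      · rw [h0]
        simpa using hQ f
      · exact (hcon f h0).le
    · exact ⟨f0, Finset.mem_univ f0, hcon f0 hf0⟩
  have hre : ∑ f : Fin d → Fin m, ∑ i, ∑ x, (uu L r (Fin.cons i f) x)^2
      = ∑ g : Fin (d+1) → Fin m, ∑ x, (uu L r g x)^2 := by
    rw [sum_insertNth (0 : Fin (d+1)) (fun g => ∑ x, (uu L r g x)^2)]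
    simp only [Fin.insertNth_zero']
    exact Finset.sum_comm
  have hfac : ∑ f : Fin d → Fin m, ((d:ℝ)+1) * (dL L f)^2 * (∑ i, ∑ x, (r i x)^2)
      = ((d:ℝ)+1) * ((∑ f : Fin d → Fin m, (dL L f)^2) * (∑ i, ∑ x, (r i x)^2)) := by
    rw [← Finset.sum_mul, ← Finset.mul_sum, mul_assoc]
  rw [hre, hfac] at hlt
  exact absurd (star L r) (not_le.mpr hlt)


lemma build {m n d : ℕ} (A Ak R : Matrix (Fin m) (Fin n) ℝ)
    (hA : ∀ i x, A i x = Ak i x + R i x)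
    (L : Fin m → Fin d → ℝ) (W : Fin d → Fin n → ℝ)
    (hfact : ∀ i x, Ak i x = ∑ q, L i q * W q x)
    (f0 : Fin d → Fin m) (hf0 : dL L f0 ≠ 0) :
    ∃ f : Fin d → Fin m, ∃ γ : Fin m → Fin d → ℝ,
      ∑ i, ∑ x, (A i x - ∑ t, γ i t * A (f t) x)^2
        ≤ ((d:ℝ)+1) * (∑ i, ∑ x, (R i x)^2) := by
  cases d with
  | zero =>
    refine ⟨fun z => z.elim0, fun _ _ => 0, ?_⟩
    have hAR : ∀ i x, A i x = R i x := by
      intro i x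
      rw [hA i x, hfact i x]
      simp
    simp only [Finset.univ_eq_empty, Finset.sum_empty, sub_zero]
    have hEq : ∑ i, ∑ x, (A i x)^2 = ∑ i, ∑ x, (R i x)^2 :=
      Finset.sum_congr rfl fun i _ => Finset.sum_congr rfl fun x _ => by rw [hAR i x]
    rw [hEq]
    have hnn : (0:ℝ) ≤ ∑ i, ∑ x, (R i x)^2 :=
      Finset.sum_nonneg fun _ _ => Finset.sum_nonneg fun _ _ => sq_nonneg _
    norm_num
  | succ e =>
    obtain ⟨f, hf, hQ⟩ := key L R f0 hf0
    set M : Matrix (Fin (e+1)) (Fin (e+1)) ℝ := Matrix.of (fun p => L (f p)) with hM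
    have hdet : M.det = dL L f := rfl
    have hdet0 : M.det ≠ 0 := by rw [hdet]; exact hf
    set γ : Fin m → Fin (e+1) → ℝ :=
      fun i => (M.det)⁻¹ • ((Mᵀ).cramer (L i)) with hγ
    refine ⟨f, γ, ?_⟩
    -- Cramer coefficients reproduce L i
    have hγL : ∀ i q, ∑ t, γ i t * L (f t) q = L i q := by
      intro i q
      have hc := Matrix.mulVec_cramer Mᵀ (L i)
      have hcq := congrFun hc q
      have hexp : (Mᵀ *ᵥ (Mᵀ).cramer (L i)) q
          = ∑ t, L (f t) q * (Mᵀ).cramer (L i) t := by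
        simp [Matrix.mulVec, dotProduct, Matrix.transpose_apply, hM, Matrix.of_apply]
      rw [hexp] at hcq
      have hdt : Mᵀ.det = M.det := Matrix.det_transpose M
      rw [hdt] at hcq
      calc ∑ t, γ i t * L (f t) q
          = (M.det)⁻¹ * ∑ t, L (f t) q * (Mᵀ).cramer (L i) t := by
            rw [Finset.mul_sum]
            refine Finset.sum_congr rfl fun t _ => ?_
            simp [hγ, Pi.smul_apply, smul_eq_mul]
            ring
        _ = (M.det)⁻¹ * (M.det * L i q) := by rw [hcq]; simp [Pi.smul_apply, smul_eq_mul]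
        _ = L i q := by field_simp
    -- γ reproduces the rows of Ak
    have hγAk : ∀ i x, ∑ t, γ i t * Ak (f t) x = Ak i x := by
      intro i x
      calc ∑ t, γ i t * Ak (f t) x
          = ∑ t, ∑ q, γ i t * (L (f t) q * W q x) := by
            refine Finset.sum_congr rfl fun t _ => ?_
            rw [hfact (f t) x, Finset.mul_sum]
        _ = ∑ q, (∑ t, γ i t * L (f t) q) * W q x := by
            rw [Finset.sum_comm]
            refine Finset.sum_congr rfl fun q _ => ?_
            rw [Finset.sum_mul]
            exact Finset.sum_congr rfl fun t _ => by ring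
        _ = ∑ q, L i q * W q x := by
            refine Finset.sum_congr rfl fun q _ => ?_
            rw [hγL i q]
        _ = Ak i x := (hfact i x).symm
    -- residual identity
    have hres : ∀ i x, A i x - ∑ t, γ i t * A (f t) x
        = R i x - ∑ t, γ i t * R (f t) x := by
      intro i x
      have hsplit : ∑ t, γ i t * A (f t) x
          = (∑ t, γ i t * Ak (f t) x) + ∑ t, γ i t * R (f t) x := by
        rw [← Finset.sum_add_distrib]
        refine Finset.sum_congr rfl fun t _ => ?_
        rw [hA (f t) x]
        ring
      rw [hA i x, hsplit, hγAk i x]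
      ring
    -- Cramer determinant formula
    have hcram : ∀ i t, M.det * γ i t = (M.updateRow t (L i)).det := by
      intro i t
      rw [← Matrix.cramer_transpose_apply]
      simp [hγ, Pi.smul_apply, smul_eq_mul]
      field_simp
    -- the u-identity
    have hu : ∀ i x, uu L R (Fin.cons i f) x
        = M.det * (R i x - ∑ t, γ i t * R (f t) x) := by
      intro i x
      have h2 : ∀ t : Fin (e+1), (-1:ℝ)^(t:ℕ) * (-1:ℝ)^(t:ℕ) = 1 := by
        intro t
        rw [← pow_add]
        exact Even.neg_one_pow ⟨(t:ℕ), rfl⟩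
      have hterm : ∀ t : Fin (e+1),
          dL L (fun s => (Fin.cons i f : Fin (e+2) → Fin m) ((t.succ).succAbove s))
            = (-1:ℝ)^(t:ℕ) * (M.updateRow t (L i)).det := by
        intro t
        have hfun : (fun s : Fin (e+1) => (Fin.cons i f : Fin (e+2) → Fin m) (Fin.succAbove t.succ s))
            = (Fin.cons i (fun s => f (t.succAbove s)) : Fin (e+1) → Fin m) := by
          funext s
          refine Fin.cases ?_ ?_ s
          · simp
          · intro s'
            simp [Fin.succ_succAbove_succ]
        rw [hfun]
        have hrow : (fun p : Fin (e+1) => L ((Fin.cons i (fun s => f (t.succAbove s)) : Fin (e+1) → Fin m) p))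
            = Fin.cons (L i) (fun s => L (f (t.succAbove s))) := by
          funext p
          refine Fin.cases rfl (fun s => rfl) p
        have hhead : (M.updateRow t (L i)) t = L i := Matrix.updateRow_self
        have htail : (fun s : Fin e => (M.updateRow t (L i)) (t.succAbove s))
            = fun s => L (f (t.succAbove s)) := by
          funext s
          rw [Matrix.updateRow_ne (Fin.succAbove_ne t s)]
          rfl
        have hup : (M.updateRow t (L i)).det
            = (-1:ℝ)^(t:ℕ) *
                Matrix.det (Matrix.of (Fin.cons (L i) (fun s => L (f (t.succAbove s))))) := by
          have h0 := det_cycle (M.updateRow t (L i)) t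
          rw [hhead, htail] at h0
          exact h0
        show Matrix.det (Matrix.of (fun p => L ((Fin.cons i (fun s => f (t.succAbove s)) : Fin (e+1) → Fin m) p)))
            = (-1:ℝ)^(t:ℕ) * (M.updateRow t (L i)).det
        rw [hrow, hup, ← mul_assoc, h2 t, one_mul]
      have hstep : ∀ t : Fin (e+1),
          (-1:ℝ)^((t:ℕ)+1) * ((-1:ℝ)^(t:ℕ) * (M.updateRow t (L i)).det) * R (f t) x
            = -(M.det * γ i t * R (f t) x) := by
        intro t
        rw [hcram i t, pow_succ]
        linear_combination (-(M.updateRow t (L i)).det * R (f t) x) * h2 t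
      show (∑ j : Fin (e+2), (-1:ℝ)^(j:ℕ) * dL L (fun s => (Fin.cons i f : Fin (e+2) → Fin m) (j.succAbove s))
              * R ((Fin.cons i f : Fin (e+2) → Fin m) j) x)
          = M.det * (R i x - ∑ t, γ i t * R (f t) x)
      rw [Fin.sum_univ_succ]
      simp only [Fin.val_zero, pow_zero, one_mul, Fin.cons_zero, Fin.zero_succAbove,
        Fin.cons_succ, Fin.val_succ]
      have hsum : ∑ t : Fin (e+1),
          (-1:ℝ)^((t:ℕ)+1) * dL L (fun s => (Fin.cons i f : Fin (e+2) → Fin m) ((t.succ).succAbove s)) * R (f t) x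
          = ∑ t : Fin (e+1), -(M.det * γ i t * R (f t) x) := by
        refine Finset.sum_congr rfl fun t _ => ?_
        rw [hterm t]
        exact hstep t
      rw [hsum, Finset.sum_neg_distrib]
      have h3 : ∑ t, M.det * γ i t * R (f t) x = ∑ t, M.det * (γ i t * R (f t) x) :=
        Finset.sum_congr rfl fun t _ => by ring
      rw [mul_sub, Finset.mul_sum, ← h3]
      have h4 : dL L (fun s => f s) = M.det := rfl
      rw [h4]
      ring
    -- put everything together
    have hfrob : ∑ i, ∑ x, (A i x - ∑ t, γ i t * A (f t) x)^2
        = ∑ i, ∑ x, (R i x - ∑ t, γ i t * R (f t) x)^2 :=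
      Finset.sum_congr rfl fun i _ => Finset.sum_congr rfl fun x _ => by rw [hres i x]
    have hsq : (M.det)^2 * (∑ i, ∑ x, (R i x - ∑ t, γ i t * R (f t) x)^2)
        = ∑ i, ∑ x, (uu L R (Fin.cons i f) x)^2 := by
      rw [Finset.mul_sum]
      refine Finset.sum_congr rfl fun i _ => ?_
      rw [Finset.mul_sum]
      refine Finset.sum_congr rfl fun x _ => ?_
      rw [hu i x, mul_pow]
    have hdpos : 0 < (M.det)^2 :=
      lt_of_le_of_ne (sq_nonneg _) (Ne.symm (pow_ne_zero 2 hdet0))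
    rw [hfrob, ← mul_le_mul_iff_right₀ hdpos]
    calc (M.det)^2 * (∑ i, ∑ x, (R i x - ∑ t, γ i t * R (f t) x)^2)
        = ∑ i, ∑ x, (uu L R (Fin.cons i f) x)^2 := hsq
      _ ≤ (((e+1:ℕ):ℝ)+1) * (dL L f)^2 * (∑ i, ∑ x, (R i x)^2) := hQ
      _ = (M.det)^2 * ((((e+1:ℕ):ℝ)+1) * (∑ i, ∑ x, (R i x)^2)) := by
          rw [hdet]
          ring


theorem main_theorem (m n k : ℕ) (hk : k ≤ m)
    (A Ak : Matrix (Fin m) (Fin n) ℝ) (hAk_rank : Ak.rank ≤ k) :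
    ∃ S : Finset (Fin m), S.card = k ∧
      ∃ At : Matrix (Fin m) (Fin n) ℝ, At.rank ≤ k ∧
        (∀ i, (fun j => At i j) ∈
          Submodule.span ℝ {v : Fin n → ℝ | ∃ i' ∈ S, v = fun j => A i' j}) ∧
        frobSq (A - At) ≤ (k + 1) * frobSq (A - Ak) := by
  classical
  set R : Matrix (Fin m) (Fin n) ℝ := A - Ak with hR
  set V : Submodule ℝ (Fin n → ℝ) := Submodule.span ℝ (Set.range Ak) with hV
  haveI : FiniteDimensional ℝ V := FiniteDimensional.span_of_finite ℝ (Set.finite_range _)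
  have hdk : Module.finrank ℝ V ≤ k := by
    rw [hV]
    exact (Matrix.rank_eq_finrank_span_row Ak).symm.le.trans hAk_rank
  set d : ℕ := Module.finrank ℝ V with hd
  let b : Module.Basis (Fin d) ℝ V := Module.finBasis ℝ V
  have hmem : ∀ i, Ak i ∈ V := fun i => Submodule.subset_span ⟨i, rfl⟩
  set L : Fin m → Fin d → ℝ := fun i => b.equivFun ⟨Ak i, hmem i⟩ with hL
  set Wr : Fin d → Fin n → ℝ := fun q => (b q : Fin n → ℝ) with hWr
  have hfact : ∀ i x, Ak i x = ∑ q, L i q * Wr q x := by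
    intro i x
    have hs := b.sum_equivFun ⟨Ak i, hmem i⟩
    have := congrArg (fun z : V => (z : Fin n → ℝ) x) hs
    simp only [AddSubmonoidClass.coe_finset_sum, SetLike.val_smul, Finset.sum_apply,
      Pi.smul_apply, smul_eq_mul] at this
    exact this.symm
  -- the rows of L span (Fin d → ℝ)
  have hspanL : Submodule.span ℝ (Set.range L) = ⊤ := by
    have h1 : Submodule.span ℝ (Set.range (fun i => (⟨Ak i, hmem i⟩ : V))) = ⊤ := by
      apply Submodule.map_injective_of_injective V.injective_subtype
      rw [Submodule.map_span, Submodule.map_top, Submodule.range_subtype, ← Set.range_comp]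
      exact hV.symm
    have h2 : Set.range L = ⇑(b.equivFun.toLinearMap) '' Set.range (fun i => (⟨Ak i, hmem i⟩ : V)) := by
      rw [← Set.range_comp]
      rfl
    rw [h2, ← Submodule.map_span, h1, Submodule.map_top, LinearMap.range_eq_top.mpr]
    exact b.equivFun.surjective
  -- extract d linearly independent rows
  obtain ⟨t, hts, htspan, htli⟩ := exists_linearIndependent ℝ (Set.range L)
  rw [hspanL] at htspan
  have htfin : t.Finite := Set.Finite.subset (Set.finite_range L) hts
  haveI := htfin.fintype
  let bt : Module.Basis t ℝ (Fin d → ℝ) := Module.Basis.mk htli (by rw [Subtype.range_coe, htspan])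
  have hcard : Fintype.card t = d := by
    have h1 := Module.finrank_eq_card_basis bt
    rw [Module.finrank_fin_fun] at h1
    exact h1.symm
  let eqv : Fin d ≃ t := (Fintype.equivFinOfCardEq hcard).symm
  have hchoice : ∀ y : t, ∃ i : Fin m, L i = (y : Fin d → ℝ) := fun y => hts y.2
  choose idx hidx using hchoice
  set f0 : Fin d → Fin m := fun j => idx (eqv j) with hf0def
  have hli : LinearIndependent ℝ (fun j : Fin d => L (f0 j)) := by
    have heq : (fun j : Fin d => L (f0 j)) = (fun y : t => (y : Fin d → ℝ)) ∘ eqv := by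
      funext j
      exact hidx (eqv j)
    rw [heq]
    exact htli.comp eqv eqv.injective
  have hdet0 : dL L f0 ≠ 0 := by
    have hunit : IsUnit (Matrix.of (fun p => L (f0 p))) :=
      Matrix.linearIndependent_rows_iff_isUnit.mp hli
    exact ((Matrix.isUnit_iff_isUnit_det _).mp hunit).ne_zero
  -- apply build
  have hAsplit : ∀ i x, A i x = Ak i x + R i x := by
    intro i x
    simp [hR, Matrix.sub_apply]
  obtain ⟨f, γ, hbound⟩ := build A Ak R hAsplit L Wr hfact f0 hdet0
  -- the subset S
  have himgcard : (Finset.image f Finset.univ).card ≤ k := by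
    calc (Finset.image f Finset.univ).card ≤ (Finset.univ : Finset (Fin d)).card :=
          Finset.card_image_le
      _ = d := by simp
      _ ≤ k := hdk
  obtain ⟨S, hSsub, _, hScard⟩ := Finset.exists_subsuperset_card_eq
    (Finset.subset_univ (Finset.image f Finset.univ)) himgcard (by simpa using hk)
  set At : Matrix (Fin m) (Fin n) ℝ := Matrix.of (fun i x => ∑ t, γ i t * A (f t) x) with hAt
  refine ⟨S, hScard, At, ?_, ?_, ?_⟩
  · -- rank bound
    have hfactor : At = (Matrix.of fun i t => γ i t) * (Matrix.of fun t x => A (f t) x) := by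
      ext i x
      simp [hAt, Matrix.mul_apply]
    calc At.rank ≤ (Matrix.of fun (t : Fin d) x => A (f t) x).rank := by
          rw [hfactor]
          exact Matrix.rank_mul_le_right _ _
      _ ≤ Fintype.card (Fin d) := Matrix.rank_le_card_height _
      _ ≤ k := by simpa using hdk
  · -- membership
    intro i
    have hAti : (fun x => At i x) = ∑ t : Fin d, γ i t • (fun x => A (f t) x) := by
      funext x
      simp [hAt, Finset.sum_apply, Pi.smul_apply, smul_eq_mul]
    rw [hAti]
    refine Submodule.sum_mem _ fun t _ => Submodule.smul_mem _ _ ?_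
    refine Submodule.subset_span ?_
    exact ⟨f t, hSsub (Finset.mem_image_of_mem f (Finset.mem_univ t)), rfl⟩
  · -- error bound
    have hfrob1 : frobSq (A - At) = ∑ i, ∑ x, (A i x - ∑ t, γ i t * A (f t) x)^2 := by
      simp [frobSq, Matrix.sub_apply, hAt]
    have hfrob2 : frobSq (A - Ak) = ∑ i, ∑ x, (R i x)^2 := by
      simp [frobSq, Matrix.sub_apply, hR]
    have hT : (0:ℝ) ≤ ∑ i, ∑ x, (R i x)^2 :=
      Finset.sum_nonneg fun _ _ => Finset.sum_nonneg fun _ _ => sq_nonneg _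
    rw [hfrob1, hfrob2]
    calc ∑ i, ∑ x, (A i x - ∑ t, γ i t * A (f t) x)^2
        ≤ ((d:ℝ)+1) * (∑ i, ∑ x, (R i x)^2) := hbound
      _ ≤ ((k:ℝ)+1) * (∑ i, ∑ x, (R i x)^2) := by
          apply mul_le_mul_of_nonneg_right _ hT
          have : (d:ℝ) ≤ (k:ℝ) := Nat.cast_le.mpr hdk
          linarith

end KRowsAux

/-- **Existence of `k` spanning rows.** Any `m × n` matrix `A` (with `k ≤ m`) has `k` rows
whose span contains the rows of a rank-`k` matrix `Ã` with
`‖A - Ã‖_F² ≤ (k+1) ‖A - A_k‖_F²`, where `A_k` is a best rank-`k` approximation of `A`. -/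
theorem exists_k_rows_spanning_approx (m n k : ℕ) (hk : k ≤ m)
    (A Ak : Matrix (Fin m) (Fin n) ℝ) (hAk_rank : Ak.rank ≤ k)
    (hAk_best : ∀ C : Matrix (Fin m) (Fin n) ℝ, C.rank ≤ k →
      frobSq (A - Ak) ≤ frobSq (A - C)) :
    ∃ S : Finset (Fin m), S.card = k ∧
      ∃ At : Matrix (Fin m) (Fin n) ℝ, At.rank ≤ k ∧
        (∀ i, (fun j => At i j) ∈
          Submodule.span ℝ {v : Fin n → ℝ | ∃ i' ∈ S, v = fun j => A i' j}) ∧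
        frobSq (A - At) ≤ (k + 1) * frobSq (A - Ak) :=
  KRowsAux.main_theorem m n k hk A Ak hAk_rank
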